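/- For π, ρ ∈ NC(n), the meandric system M_{π,ρ} is a meander (i.e., the permutation M_{π,ρ} ∈ S_{2n} has exactly one orbit) if and only if A(π) ∨̃ A(ρ) = 1_{2n}, where ∨̃ denotes the join in the lattice P(2n) of all partitions of {1,...,2n}. -/

import Mathlib

open scoped Classical

/-- A setoid (partition) of `Fin n` is non-crossing if there is no crossing
`a < b < c < d` with `a ∼ c`, `b ∼ d` but `a` and `b` in distinct blocks. -/
def IsNC {n : ℕ} (S : Setoid (Fin n)) : Prop :=
  ∀ a b c d : Fin n, a < b → b < c → c < d → S.r a c → S.r b d → S.r a b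

/-- A partition is a pairing if every block has exactly two elements. -/
def IsPairing {m : ℕ} (T : Setoid (Fin m)) : Prop :=
  ∀ x : Fin m, ∃ y : Fin m, y ≠ x ∧ T.r x y ∧ ∀ z : Fin m, T.r x z → z = x ∨ z = y

/-- The block of `i` in the partition `S`, as a finset. -/
noncomputable def blockOf {n : ℕ} (S : Setoid (Fin n)) (i : Fin n) : Finset (Fin n) :=
  Finset.univ.filter (fun j => S.r i j)

lemma blockOf_nonempty {n : ℕ} (S : Setoid (Fin n)) (i : Fin n) :
    (blockOf S i).Nonempty :=
  ⟨i, by simp [blockOf, S.iseqv.refl i]⟩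

/-- The permutation `P_S` which performs an increasing cycle on every block of `S`:
it sends `i` to the next larger element of its block, or to the minimum of the
block if `i` is the largest element of its block. -/
noncomputable def nextP {n : ℕ} (S : Setoid (Fin n)) (i : Fin n) : Fin n :=
  if h : ((blockOf S i).filter (fun j => i < j)).Nonempty
  then ((blockOf S i).filter (fun j => i < j)).min' h
  else (blockOf S i).min' (blockOf_nonempty S i)

/-- The inverse permutation `P_S⁻¹` (decreasing cycle on every block of `S`). -/
noncomputable def prevP {n : ℕ} (S : Setoid (Fin n)) (i : Fin n) : Fin n :=
  if h : ((blockOf S i).filter (fun j => j < i)).Nonempty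
  then ((blockOf S i).filter (fun j => j < i)).max' h
  else (blockOf S i).max' (blockOf_nonempty S i)

/-- `0`-indexed version of the point `2i-1` of `{1,…,2n}`. -/
def dEven {n : ℕ} (j : Fin n) : Fin (2*n) := ⟨2*j.val, by have := j.isLt; omega⟩

/-- `0`-indexed version of the point `2i` of `{1,…,2n}`. -/
def dOdd {n : ℕ} (j : Fin n) : Fin (2*n) := ⟨2*j.val+1, by have := j.isLt; omega⟩

/-- The doubling construction `π ↦ A(π)`: the pairing of `{1,…,2n}` generated by
pairing each point `2i` with `2P_π(i) - 1`, so that the associated permutation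
satisfies `P_{A(π)}(2i) = 2P_π(i) - 1` and `P_{A(π)}(2i-1) = 2P_π⁻¹(i)`. -/
noncomputable def archSetoid {n : ℕ} (S : Setoid (Fin n)) : Setoid (Fin (2*n)) :=
  Relation.EqvGen.setoid (fun a b => ∃ j : Fin n, a = dOdd j ∧ b = dEven (nextP S j))

/-- The meandric system permutation `M_{π,ρ} ∈ S_{2n}`, defined by
`M_{π,ρ}(2i-1) = 2P_π⁻¹(i)` and `M_{π,ρ}(2i) = 2P_ρ(i) - 1` (here `0`-indexed). -/
noncomputable def meanderMap {n : ℕ} (π ρ : Setoid (Fin n)) (x : Fin (2*n)) : Fin (2*n) :=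
  if x.val % 2 = 0
  then dOdd (prevP π ⟨x.val / 2, by have := x.isLt; omega⟩)
  else dEven (nextP ρ ⟨x.val / 2, by have := x.isLt; omega⟩)

/-- The orbit partition of a map. -/
def orbitSetoid {m : ℕ} (f : Fin m → Fin m) : Setoid (Fin m) :=
  Relation.EqvGen.setoid (fun a b => f a = b)

/-- Number of orbits of a map. -/
noncomputable def numOrbits {m : ℕ} (f : Fin m → Fin m) : ℕ :=
  Nat.card (Quotient (orbitSetoid f))

/-- `S` is a union of blocks of the partition `T`. -/
def IsBlockUnion {m : ℕ} (T : Setoid (Fin m)) (S : Set (Fin m)) : Prop :=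
  ∀ x ∈ S, ∀ y, T.r x y → y ∈ S

/-- `S` is invariant under `f`. -/
def MInvariant {m : ℕ} (f : Fin m → Fin m) (S : Set (Fin m)) : Prop :=
  ∀ x ∈ S, f x ∈ S

/-- The meandric system `M_{π,ρ}` is reducible: some proper subinterval
`{a,…,b}` of `{1,…,2n}` is invariant under `M_{π,ρ}`. -/
noncomputable def Reducible {n : ℕ} (π ρ : Setoid (Fin n)) : Prop :=
  ∃ a b : Fin (2*n), a ≤ b ∧ b.val - a.val < 2*n - 1 ∧
    MInvariant (meanderMap π ρ) {x | a ≤ x ∧ x ≤ b}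

/-- The join in the lattice of non-crossing partitions: the smallest
non-crossing partition above both `π` and `ρ`. -/
noncomputable def ncJoin {m : ℕ} (π ρ : Setoid (Fin m)) : Setoid (Fin m) :=
  sInf {τ | IsNC τ ∧ π ≤ τ ∧ ρ ≤ τ}

/-- The moment-cumulant formula of free probability: `mom n` is the sum over all
non-crossing partitions of `{1,…,n}` of the products of cumulants `κ` indexed
by the block sizes.  This uniquely determines the free cumulants `κ n`, `n ≥ 1`,
of a sequence of moments. -/
def MomCum {F : Type*} [Field F] (mom κ : ℕ → F) : Prop :=
  ∀ n : ℕ, 0 < n →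
    mom n = ∑ᶠ S ∈ {S : Setoid (Fin n) | IsNC S}, ∏ᶠ B ∈ Setoid.classes S, κ B.ncard

/-- The number of irreducible meandric systems on `2k` bridges, described as the
number of pairs `(π,ρ) ∈ NC(k)²` with `π ∨ ρ = 1_k`, `π ∧ ρ = 0_k`. -/
noncomputable def mirr (k : ℕ) : ℕ :=
  Nat.card {pr : Setoid (Fin k) × Setoid (Fin k) //
    IsNC pr.1 ∧ IsNC pr.2 ∧ ncJoin pr.1 pr.2 = ⊤ ∧ pr.1 ⊓ pr.2 = ⊥}

/-- The number of pairs `(π,ρ) ∈ NC(n)²` whose meandric system `M_{π,ρ}` has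
exactly `k` orbits (connected components). -/
noncomputable def mcount (n k : ℕ) : ℕ :=
  Nat.card {pr : Setoid (Fin n) × Setoid (Fin n) //
    IsNC pr.1 ∧ IsNC pr.2 ∧ numOrbits (meanderMap pr.1 pr.2) = k}

/-- The number of meanders on `2n` bridges. -/
noncomputable def meanderNum (n : ℕ) : ℕ := mcount n 1
section MeanderAux

variable {n : ℕ}

lemma mem_blockOf (S : Setoid (Fin n)) {i j : Fin n} : j ∈ blockOf S i ↔ S.r i j := by
  simp [blockOf]

lemma blockOf_congr (S : Setoid (Fin n)) {i j : Fin n} (h : S.r i j) :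
    blockOf S i = blockOf S j := by
  ext k
  simp only [mem_blockOf]
  exact ⟨fun hk => S.iseqv.trans (S.iseqv.symm h) hk, fun hk => S.iseqv.trans h hk⟩

lemma prevP_mem (S : Setoid (Fin n)) (i : Fin n) : prevP S i ∈ blockOf S i := by
  unfold prevP
  split
  · exact Finset.mem_of_mem_filter _ (Finset.max'_mem _ _)
  · exact Finset.max'_mem _ _

lemma nextP_mem (S : Setoid (Fin n)) (i : Fin n) : nextP S i ∈ blockOf S i := by
  unfold nextP
  split
  · exact Finset.mem_of_mem_filter _ (Finset.min'_mem _ _)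
  · exact Finset.min'_mem _ _

lemma nextP_prevP (S : Setoid (Fin n)) (i : Fin n) : nextP S (prevP S i) = i := by
  have hrel : S.r i (prevP S i) := (mem_blockOf S).1 (prevP_mem S i)
  have hblock : blockOf S (prevP S i) = blockOf S i := (blockOf_congr S hrel).symm
  by_cases h : ((blockOf S i).filter (fun j => j < i)).Nonempty
  · have hpdef : prevP S i = ((blockOf S i).filter (fun j => j < i)).max' h := by
      rw [prevP, dif_pos h]
    have hpi : prevP S i < i := by
      rw [hpdef]; exact (Finset.mem_filter.1 (Finset.max'_mem _ h)).2
    have hiF : i ∈ (blockOf S (prevP S i)).filter (fun j => prevP S i < j) := by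
      refine Finset.mem_filter.2 ⟨?_, hpi⟩
      rw [hblock]; exact (mem_blockOf S).2 (S.iseqv.refl i)
    have hne : ((blockOf S (prevP S i)).filter (fun j => prevP S i < j)).Nonempty := ⟨i, hiF⟩
    rw [nextP, dif_pos hne]
    refine le_antisymm (Finset.min'_le _ _ hiF) ?_
    by_contra hlt
    push_neg at hlt
    have hmmem := Finset.min'_mem _ hne
    have hm := Finset.mem_filter.1 hmmem
    have hm1 : ((blockOf S (prevP S i)).filter (fun j => prevP S i < j)).min' hne
        ∈ blockOf S i := by rw [← hblock]; exact hm.1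
    have : ((blockOf S (prevP S i)).filter (fun j => prevP S i < j)).min' hne ≤ prevP S i := by
      have hmemF : ((blockOf S (prevP S i)).filter (fun j => prevP S i < j)).min' hne ∈
          (blockOf S i).filter (fun j => j < i) := Finset.mem_filter.2 ⟨hm1, hlt⟩
      have h2 := Finset.le_max' _ _ hmemF
      rwa [← hpdef] at h2
    exact absurd this (not_le.2 hm.2)
  · have hpdef : prevP S i = (blockOf S i).max' (blockOf_nonempty S i) := by
      rw [prevP, dif_neg h]
    have hempty : ¬ ((blockOf S (prevP S i)).filter (fun j => prevP S i < j)).Nonempty := by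
      rintro ⟨j, hj⟩
      have hj' := Finset.mem_filter.1 hj
      have hj1 : j ∈ blockOf S i := by rw [← hblock]; exact hj'.1
      have : j ≤ prevP S i := by rw [hpdef]; exact Finset.le_max' _ _ hj1
      exact absurd this (not_le.2 hj'.2)
    rw [nextP, dif_neg hempty]
    have himem : i ∈ blockOf S (prevP S i) := by
      rw [hblock]; exact (mem_blockOf S).2 (S.iseqv.refl i)
    refine le_antisymm (Finset.min'_le _ _ himem) ?_
    by_contra hlt
    push_neg at hlt
    have hmmem := Finset.min'_mem _ (blockOf_nonempty S (prevP S i))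
    have hm1 : (blockOf S (prevP S i)).min' (blockOf_nonempty S (prevP S i))
        ∈ blockOf S i := by rw [← hblock]; exact hmmem
    exact h ⟨_, Finset.mem_filter.2 ⟨hm1, hlt⟩⟩

lemma prevP_nextP (S : Setoid (Fin n)) (i : Fin n) : prevP S (nextP S i) = i := by
  have hrel : S.r i (nextP S i) := (mem_blockOf S).1 (nextP_mem S i)
  have hblock : blockOf S (nextP S i) = blockOf S i := (blockOf_congr S hrel).symm
  by_cases h : ((blockOf S i).filter (fun j => i < j)).Nonempty
  · have hpdef : nextP S i = ((blockOf S i).filter (fun j => i < j)).min' h := by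
      rw [nextP, dif_pos h]
    have hpi : i < nextP S i := by
      rw [hpdef]; exact (Finset.mem_filter.1 (Finset.min'_mem _ h)).2
    have hiF : i ∈ (blockOf S (nextP S i)).filter (fun j => j < nextP S i) := by
      refine Finset.mem_filter.2 ⟨?_, hpi⟩
      rw [hblock]; exact (mem_blockOf S).2 (S.iseqv.refl i)
    have hne : ((blockOf S (nextP S i)).filter (fun j => j < nextP S i)).Nonempty := ⟨i, hiF⟩
    rw [prevP, dif_pos hne]
    refine le_antisymm ?_ (Finset.le_max' _ _ hiF)
    by_contra hlt
    push_neg at hlt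
    have hmmem := Finset.max'_mem _ hne
    have hm := Finset.mem_filter.1 hmmem
    have hm1 : ((blockOf S (nextP S i)).filter (fun j => j < nextP S i)).max' hne
        ∈ blockOf S i := by rw [← hblock]; exact hm.1
    have : nextP S i ≤ ((blockOf S (nextP S i)).filter (fun j => j < nextP S i)).max' hne := by
      have hmemF : ((blockOf S (nextP S i)).filter (fun j => j < nextP S i)).max' hne ∈
          (blockOf S i).filter (fun j => i < j) := Finset.mem_filter.2 ⟨hm1, hlt⟩
      have h2 := Finset.min'_le _ _ hmemF
      rwa [← hpdef] at h2
    exact absurd this (not_le.2 hm.2)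
  · have hpdef : nextP S i = (blockOf S i).min' (blockOf_nonempty S i) := by
      rw [nextP, dif_neg h]
    have hempty : ¬ ((blockOf S (nextP S i)).filter (fun j => j < nextP S i)).Nonempty := by
      rintro ⟨j, hj⟩
      have hj' := Finset.mem_filter.1 hj
      have hj1 : j ∈ blockOf S i := by rw [← hblock]; exact hj'.1
      have : nextP S i ≤ j := by rw [hpdef]; exact Finset.min'_le _ _ hj1
      exact absurd this (not_le.2 hj'.2)
    rw [prevP, dif_neg hempty]
    have himem : i ∈ blockOf S (nextP S i) := by
      rw [hblock]; exact (mem_blockOf S).2 (S.iseqv.refl i)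
    refine le_antisymm ?_ (Finset.le_max' _ _ himem)
    by_contra hlt
    push_neg at hlt
    have hmmem := Finset.max'_mem _ (blockOf_nonempty S (nextP S i))
    have hm1 : (blockOf S (nextP S i)).max' (blockOf_nonempty S (nextP S i))
        ∈ blockOf S i := by rw [← hblock]; exact hmmem
    exact h ⟨_, Finset.mem_filter.2 ⟨hm1, hlt⟩⟩

lemma meanderMap_dEven (π ρ : Setoid (Fin n)) (i : Fin n) :
    meanderMap π ρ (dEven i) = dOdd (prevP π i) := by
  have h0 : (dEven i).val % 2 = 0 := by simp [dEven, Nat.mul_mod_right]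
  rw [meanderMap, if_pos h0]
  congr 2
  ext
  simp only [dEven]
  omega

lemma meanderMap_dOdd (π ρ : Setoid (Fin n)) (i : Fin n) :
    meanderMap π ρ (dOdd i) = dEven (nextP ρ i) := by
  have h0 : ¬ (dOdd i).val % 2 = 0 := by simp [dOdd, Nat.add_mul_mod_self_left]
  rw [meanderMap, if_neg h0]
  congr 2
  ext
  simp only [dOdd]
  omega

lemma orbitSetoid_meanderMap_eq (π ρ : Setoid (Fin n)) :
    orbitSetoid (meanderMap π ρ) = archSetoid π ⊔ archSetoid ρ := by
  apply le_antisymm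
  · apply Setoid.eqvGen_le
    intro a b hab
    subst hab
    by_cases hpar : a.val % 2 = 0
    · have ha : a = dEven ⟨a.val / 2, by have := a.isLt; omega⟩ := by
        ext; simp only [dEven]; omega
      rw [ha, meanderMap_dEven]
      have harch : (archSetoid π).r (dOdd (prevP π ⟨a.val / 2, by have := a.isLt; omega⟩))
          (dEven ⟨a.val / 2, by have := a.isLt; omega⟩) := by
        have := Relation.EqvGen.rel
          (r := fun a b => ∃ j : Fin n, a = dOdd j ∧ b = dEven (nextP π j))
          (dOdd (prevP π ⟨a.val / 2, by have := a.isLt; omega⟩))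
          (dEven (nextP π (prevP π ⟨a.val / 2, by have := a.isLt; omega⟩)))
          ⟨_, rfl, rfl⟩
        rwa [nextP_prevP] at this
      exact Setoid.le_def.1 le_sup_left ((archSetoid π).iseqv.symm harch)
    · have ha : a = dOdd ⟨a.val / 2, by have := a.isLt; omega⟩ := by
        ext; simp only [dOdd]; omega
      rw [ha, meanderMap_dOdd]
      have harch : (archSetoid ρ).r (dOdd ⟨a.val / 2, by have := a.isLt; omega⟩)
          (dEven (nextP ρ ⟨a.val / 2, by have := a.isLt; omega⟩)) :=
        Relation.EqvGen.rel _ _ ⟨_, rfl, rfl⟩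
      exact Setoid.le_def.1 le_sup_right harch
  · refine sup_le (Setoid.eqvGen_le ?_) (Setoid.eqvGen_le ?_)
    · rintro x y ⟨j, rfl, rfl⟩
      have : (orbitSetoid (meanderMap π ρ)).r (dEven (nextP π j)) (dOdd j) := by
        refine Relation.EqvGen.rel _ _ ?_
        rw [meanderMap_dEven, prevP_nextP]
      exact (orbitSetoid (meanderMap π ρ)).iseqv.symm this
    · rintro x y ⟨j, rfl, rfl⟩
      exact Relation.EqvGen.rel _ _ (meanderMap_dOdd π ρ j)

end MeanderAux

/-- `M_{π,ρ}` is a meander (exactly one orbit) iff `A(π) ∨̃ A(ρ) = 1_{2n}`,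
join taken in the lattice of all partitions of `{1,…,2n}` (the full setoid
lattice). -/
theorem meander_iff_arch_sup_top (n : ℕ) (π ρ : Setoid (Fin n))
    (hπ : IsNC π) (hρ : IsNC ρ) :
    orbitSetoid (meanderMap π ρ) = ⊤ ↔ archSetoid π ⊔ archSetoid ρ = ⊤ := by
  rw [orbitSetoid_meanderMap_eq]
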